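/- Every sequence in X of weight n corresponds to at least one and at most two pairs (λ, μ) of strict partitions of numbers summing to n; consequently, if v(n) is the number of sequences in X of weight n ≥ 1 and ũ(n) is the number of pairs (λ, μ) of partitions into distinct parts with |λ| + |μ| = n, then ũ(n)/2 ≤ v(n) ≤ ũ(n). -/

import Mathlib

/-- A binary word avoids the pattern `x xᴿ x`: no factor `u ++ u.reverse ++ u` with `u` nonempty. -/
def AvoidsP (w : List Bool) : Prop :=
  ¬ ∃ u : List Bool, u ≠ [] ∧ (u ++ u.reverse ++ u) <:+: w

/-- A binary word avoids the factors `000` and `111`. -/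
def AvoidsCubes (w : List Bool) : Prop :=
  ¬ ([false, false, false] <:+: w) ∧ ¬ ([true, true, true] <:+: w)

/-- Alternating word: a prefix of `0101…` or `1010…`. -/
def Alt (A : List Bool) : Prop := A.Chain' (· ≠ ·)

/-- Glue the blocks `A_0 a_1 a_1 A_1 a_2 a_2 ⋯ a_k a_k A_k`. -/
def glue : List (List Bool) → List Bool → List Bool
  | [], _ => []
  | [A], _ => A
  | A :: As, [] => A ++ glue As []
  | A :: As, b :: bs => A ++ [b, b] ++ glue As bs

/-- `IsFact As bs w` : `w = A_0 b_1 b_1 A_1 ⋯ b_k b_k A_k` with all `A_i` alternating. -/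
def IsFact (As : List (List Bool)) (bs : List Bool) (w : List Bool) : Prop :=
  As.length = bs.length + 1 ∧ (∀ A ∈ As, Alt A) ∧ w = glue As bs

/-- Middle and final entries of the associated sequence: `n_i = |a_i A_i a_{i+1}|`, `n_k = |a_k A_k|`. -/
def seqMid : List (List Bool) → List ℕ
  | [] => []
  | [A] => [A.length + 1]
  | A :: As => (A.length + 2) :: seqMid As

/-- The sequence `f(w) = (n_0, …, n_k)` associated to the canonical factorization. -/
def seqOf : List (List Bool) → List ℕ
  | [] => []
  | [A] => if A.isEmpty then [] else [A.length]
  | A :: As => (A.length + 1) :: seqMid As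

/-- No index `j` with `d_{j-1} ≥ d_j` and `d_j ≤ d_{j+1}`. -/
def NoValley (d : List ℕ) : Prop :=
  ∀ j : ℕ, 1 ≤ j → j + 1 < d.length →
    ¬ (d.getD (j - 1) 0 ≥ d.getD j 0 ∧ d.getD j 0 ≤ d.getD (j + 1) 0)

/-- Membership in the set `X` of sequences. -/
def InX (d : List ℕ) : Prop := (∀ x ∈ d, 0 < x) ∧ NoValley d

/-- Type 1 (strongly unimodal): strictly increasing to a unique maximum, then strictly decreasing. -/
def Type1 (d : List ℕ) : Prop :=
  (∀ x ∈ d, 0 < x) ∧ d ≠ [] ∧ ∃ j < d.length,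
    (∀ i : ℕ, i + 1 ≤ j → d.getD i 0 < d.getD (i + 1) 0) ∧
    (∀ i : ℕ, j ≤ i → i + 1 < d.length → d.getD i 0 > d.getD (i + 1) 0)

/-- Type 2: strictly increasing, two equal consecutive maximal terms, then strictly decreasing. -/
def Type2 (d : List ℕ) : Prop :=
  (∀ x ∈ d, 0 < x) ∧ ∃ j, 1 ≤ j ∧ j < d.length ∧
    d.getD (j - 1) 0 = d.getD j 0 ∧
    (∀ i : ℕ, i + 1 ≤ j - 1 → d.getD i 0 < d.getD (i + 1) 0) ∧
    (∀ i : ℕ, j ≤ i → i + 1 < d.length → d.getD i 0 > d.getD (i + 1) 0)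

/-- `v n` : number of sequences in `X` of weight `n`. -/
noncomputable def v (n : ℕ) : ℕ := Nat.card {d : List ℕ // InX d ∧ d.sum = n}

/-- A strict partition, viewed as a finite set of positive integers. -/
def StrictPartition (s : Finset ℕ) : Prop := 0 ∉ s

/-- `utilde n` : number of pairs of partitions into distinct parts of total weight `n`. -/
noncomputable def utilde (n : ℕ) : ℕ :=
  Nat.card {p : Finset ℕ × Finset ℕ //
    StrictPartition p.1 ∧ StrictPartition p.2 ∧ p.1.sum id + p.2.sum id = n}

/-- `c n` : number of binary words of length `n` avoiding `x xᴿ x`. -/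
noncomputable def c (n : ℕ) : ℕ := Nat.card {w : List Bool // w.length = n ∧ AvoidsP w}

/-- The word `(01)^n`. -/
def w01 (n : ℕ) : List Bool := (List.replicate n [false, true]).flatten

/-- The word `(10)^n`. -/
def w10 (n : ℕ) : List Bool := (List.replicate n [true, false]).flatten

/-- The sequence in `X` obtained from a pair of strict partitions:
`λ` increasing, then `μ` decreasing. -/
def pairToSeq (p : Finset ℕ × Finset ℕ) : List ℕ :=
  p.1.sort (· ≤ ·) ++ (p.2.sort (· ≤ ·)).reverse


/-- A split point: `d` is strictly increasing before `k` and strictly decreasing from `k` on. -/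
def MySplit (d : List ℕ) (k : ℕ) : Prop :=
  k ≤ d.length ∧ (∀ i, i + 1 < k → d.getD i 0 < d.getD (i + 1) 0) ∧
  (∀ i, k ≤ i → i + 1 < d.length → d.getD (i + 1) 0 < d.getD i 0)


lemma mysplit_exists {d : List ℕ} (hnv : NoValley d) : ∃ k, MySplit d k := by
  classical
  rcases Nat.eq_zero_or_pos d.length with h0 | hpos
  · exact ⟨0, by omega, fun i hi => by omega, fun i _ hi => by omega⟩
  set P : ℕ → Prop := fun k => k ≤ d.length ∧ ∀ i, i + 1 < k → d.getD i 0 < d.getD (i + 1) 0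
    with hP
  have hP1 : P 1 := ⟨hpos, fun i hi => by omega⟩
  set k := Nat.findGreatest P d.length with hkdef
  have hk : P k := Nat.findGreatest_spec hpos hP1
  have hk1 : 1 ≤ k := Nat.le_findGreatest hpos hP1
  have hkmax : k < d.length → ¬ P (k + 1) := fun h =>
    Nat.findGreatest_is_greatest (n := d.length) (k := k + 1) (by omega) (by omega)
  have hks : k < d.length → d.getD k 0 ≤ d.getD (k - 1) 0 := by
    intro hkl
    by_contra hc
    apply hkmax hkl
    refine ⟨by omega, fun i hi => ?_⟩
    rcases Nat.lt_or_ge (i + 1) k with h | h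
    · exact hk.2 i h
    · have : i = k - 1 := by omega
      subst this
      have : k - 1 + 1 = k := by omega
      rw [this]
      omega
  have main : ∀ i, k ≤ i → i + 1 < d.length → d.getD (i + 1) 0 < d.getD i 0 := by
    intro i hki
    induction i, hki using Nat.le_induction with
    | base =>
      intro h1
      by_contra hc
      exact hnv k hk1 h1 ⟨hks (by omega), by omega⟩
    | succ i hi ih =>
      intro h2
      by_contra hc
      have hd : d.getD (i + 1) 0 < d.getD i 0 := ih (by omega)
      apply hnv (i + 1) (by omega) h2
      rw [Nat.add_sub_cancel]
      exact ⟨by omega, by omega⟩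
  exact ⟨k, hk.1, hk.2, main⟩

lemma mysplit_noValley {d : List ℕ} {k : ℕ} (h : MySplit d k) : NoValley d := by
  intro j hj1 hj2 ⟨hge, hle⟩
  rcases Nat.lt_or_ge j k with hlt | hge2
  · have := h.2.1 (j - 1) (by omega)
    have hj : j - 1 + 1 = j := by omega
    rw [hj] at this
    omega
  · have := h.2.2 j hge2 hj2
    omega

lemma mysplit_near {d : List ℕ} {k1 k2 : ℕ} (h1 : MySplit d k1) (h2 : MySplit d k2)
    (hle : k1 ≤ k2) : k2 ≤ k1 + 1 := by
  by_contra hc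
  have ha := h2.2.1 k1 (by omega)
  have hb := h1.2.2 k1 le_rfl (by have := h2.1; omega)
  omega

/-- index form of chain for a list -/
lemma chain'_lt_iff (l : List ℕ) :
    l.Chain' (· < ·) ↔ ∀ i, i + 1 < l.length → l.getD i 0 < l.getD (i + 1) 0 := by
  show List.IsChain _ l ↔ _
  rw [List.isChain_iff_getElem]
  constructor
  · intro h i hi
    have := h i (by omega)
    rwa [List.getD_eq_getElem l 0 (by omega), List.getD_eq_getElem l 0 (by omega)]
  · intro h i hi
    have := h i (by omega)
    rwa [List.getD_eq_getElem l 0 (by omega), List.getD_eq_getElem l 0 (by omega)] at this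

lemma chain'_gt_iff (l : List ℕ) :
    l.Chain' (· > ·) ↔ ∀ i, i + 1 < l.length → l.getD (i + 1) 0 < l.getD i 0 := by
  show List.IsChain _ l ↔ _
  rw [List.isChain_iff_getElem]
  constructor
  · intro h i hi
    have := h i (by omega)
    rwa [List.getD_eq_getElem l 0 (by omega), List.getD_eq_getElem l 0 (by omega)]
  · intro h i hi
    have := h i (by omega)
    rwa [List.getD_eq_getElem l 0 (by omega), List.getD_eq_getElem l 0 (by omega)] at this

lemma mysplit_iff_chain {d : List ℕ} {k : ℕ} (hk : k ≤ d.length) :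
    MySplit d k ↔ (d.take k).Chain' (· < ·) ∧ (d.drop k).Chain' (· > ·) := by
  have hlt : (d.take k).length = k := by simp [List.length_take]; omega
  have hld : (d.drop k).length = d.length - k := by simp
  have htake : ∀ i, i < k → (d.take k).getD i 0 = d.getD i 0 := by
    intro i hi
    rw [List.getD_eq_getElem _ 0 (by omega), List.getD_eq_getElem _ 0 (by omega),
      List.getElem_take]
  have hdrop : ∀ i, k + i < d.length → (d.drop k).getD i 0 = d.getD (k + i) 0 := by
    intro i hi
    rw [List.getD_eq_getElem _ 0 (by omega), List.getD_eq_getElem _ 0 (by omega),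
      List.getElem_drop]
  rw [chain'_lt_iff, chain'_gt_iff]
  constructor
  · rintro ⟨-, hinc, hdec⟩
    refine ⟨fun i hi => ?_, fun i hi => ?_⟩
    · rw [hlt] at hi
      rw [htake i (by omega), htake (i + 1) (by omega)]
      exact hinc i hi
    · rw [hld] at hi
      rw [hdrop i (by omega), hdrop (i + 1) (by omega)]
      have := hdec (k + i) (by omega) (by omega)
      have he : k + (i + 1) = k + i + 1 := by omega
      rw [he]
      exact this
  · rintro ⟨hinc, hdec⟩
    refine ⟨hk, fun i hi => ?_, fun i hik hi => ?_⟩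
    · rw [← htake i (by omega), ← htake (i + 1) (by omega)]
      exact hinc i (by omega)
    · have := hdec (i - k) (by omega)
      rw [hdrop (i - k) (by omega), hdrop (i - k + 1) (by omega)] at this
      have h1 : k + (i - k) = i := by omega
      have h2 : k + (i - k + 1) = i + 1 := by omega
      rw [h1, h2] at this
      exact this

lemma sort_of_chain {l : List ℕ} (h : l.Chain' (· < ·)) :
    l.toFinset.sort (· ≤ ·) = l := by
  have hp : l.Pairwise (· < ·) := List.isChain_iff_pairwise.mp h
  exact (List.toFinset_sort _ (hp.imp ne_of_lt)).mpr (hp.imp le_of_lt)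

lemma chain_sort (s : Finset ℕ) : (s.sort (· ≤ ·)).Chain' (· < ·) :=
  (Finset.sortedLT_sort s).isChain

lemma chain_gt_reverse {l : List ℕ} :
    (l.reverse).Chain' (· > ·) ↔ l.Chain' (· < ·) := by
  show List.IsChain _ l.reverse ↔ List.IsChain _ l
  refine List.isChain_reverse.trans ?_
  constructor
  · exact fun h => h.imp fun {a b} hb => hb
  · exact fun h => h.imp fun {a b} hb => hb

lemma sort_sum (s : Finset ℕ) : (s.sort (· ≤ ·)).sum = s.sum id := by
  rw [(Finset.sort_perm_toList s (· ≤ ·)).sum_eq]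
  simpa using Finset.sum_to_list s id

lemma sum_pairToSeq (p : Finset ℕ × Finset ℕ) :
    (pairToSeq p).sum = p.1.sum id + p.2.sum id := by
  simp [pairToSeq, List.sum_append, List.sum_reverse, sort_sum]

lemma pair_of_split {d : List ℕ} {k : ℕ} (hpos : ∀ x ∈ d, 0 < x) (h : MySplit d k) :
    StrictPartition (d.take k).toFinset ∧ StrictPartition ((d.drop k).reverse).toFinset ∧
    pairToSeq ((d.take k).toFinset, ((d.drop k).reverse).toFinset) = d := by
  obtain ⟨hc1, hc2⟩ := (mysplit_iff_chain h.1).mp h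
  have hrev : ((d.drop k).reverse).Chain' (· < ·) := by
    rw [← chain_gt_reverse, List.reverse_reverse]; exact hc2
  have s1 : (d.take k).toFinset.sort (· ≤ ·) = d.take k := sort_of_chain hc1
  have s2 : ((d.drop k).reverse).toFinset.sort (· ≤ ·) = (d.drop k).reverse :=
    sort_of_chain hrev
  refine ⟨?_, ?_, ?_⟩
  · intro h0
    rw [List.mem_toFinset] at h0
    exact absurd (hpos 0 (List.mem_of_mem_take h0)) (by omega)
  · intro h0
    rw [List.mem_toFinset, List.mem_reverse] at h0
    exact absurd (hpos 0 (List.mem_of_mem_drop h0)) (by omega)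
  · show (d.take k).toFinset.sort (· ≤ ·) ++ (((d.drop k).reverse).toFinset.sort (· ≤ ·)).reverse = d
    rw [s1, s2, List.reverse_reverse, List.take_append_drop]

lemma split_of_pair {p : Finset ℕ × Finset ℕ} {d : List ℕ} (hd : pairToSeq p = d) :
    MySplit d p.1.card ∧ p.1 = (d.take p.1.card).toFinset ∧
      p.2 = ((d.drop p.1.card).reverse).toFinset := by
  have hlen : (p.1.sort (· ≤ ·)).length = p.1.card := Finset.length_sort _
  have ht : d.take p.1.card = p.1.sort (· ≤ ·) := by
    rw [← hd, pairToSeq, ← hlen, List.take_left]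
  have hdr : d.drop p.1.card = (p.2.sort (· ≤ ·)).reverse := by
    rw [← hd, pairToSeq, ← hlen, List.drop_left]
  have hk : p.1.card ≤ d.length := by
    rw [← hd, pairToSeq, List.length_append, hlen]; omega
  refine ⟨(mysplit_iff_chain hk).mpr ⟨?_, ?_⟩, ?_, ?_⟩
  · rw [ht]; exact chain_sort _
  · rw [hdr, chain_gt_reverse]; exact chain_sort _
  · rw [ht, Finset.sort_toFinset]
  · rw [hdr, List.reverse_reverse, Finset.sort_toFinset]

lemma inX_pairToSeq {p : Finset ℕ × Finset ℕ} (h1 : StrictPartition p.1)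
    (h2 : StrictPartition p.2) : InX (pairToSeq p) := by
  constructor
  · intro x hx
    rw [pairToSeq, List.mem_append, List.mem_reverse] at hx
    apply Nat.pos_of_ne_zero
    rintro rfl
    rcases hx with hx | hx
    · exact h1 ((Finset.mem_sort _).mp hx)
    · exact h2 ((Finset.mem_sort _).mp hx)
  · exact mysplit_noValley (split_of_pair (p := p) rfl).1

lemma fiber_eq {p q : Finset ℕ × Finset ℕ} {d : List ℕ}
    (hp : pairToSeq p = d) (hq : pairToSeq q = d)
    (hpar : p.1.card % 2 = q.1.card % 2) : p = q := by
  obtain ⟨hsp, hp1, hp2⟩ := split_of_pair hp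
  obtain ⟨hsq, hq1, hq2⟩ := split_of_pair hq
  have hcard : p.1.card = q.1.card := by
    rcases le_total p.1.card q.1.card with h | h
    · have := mysplit_near hsp hsq h; omega
    · have := mysplit_near hsq hsp h; omega
  refine Prod.ext ?_ ?_
  · rw [hp1, hq1, hcard]
  · rw [hp2, hq2, hcard]

/-- Every sequence in `X` of weight `n` arises from at least one and at most two pairs of
strict partitions of total weight `n`; consequently `ũ(n)/2 ≤ v(n) ≤ ũ(n)`. -/
theorem stmt6 (n : ℕ) (hn : 1 ≤ n) :
    (∀ d : List ℕ, InX d → d.sum = n →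
      1 ≤ Nat.card {p : Finset ℕ × Finset ℕ //
            StrictPartition p.1 ∧ StrictPartition p.2 ∧ pairToSeq p = d} ∧
      Nat.card {p : Finset ℕ × Finset ℕ //
            StrictPartition p.1 ∧ StrictPartition p.2 ∧ pairToSeq p = d} ≤ 2) ∧
    utilde n ≤ 2 * v n ∧ v n ≤ utilde n := by
  classical
  constructor
  · intro d hInX _
    have hg : Function.Injective (fun q : {p : Finset ℕ × Finset ℕ //
        StrictPartition p.1 ∧ StrictPartition p.2 ∧ pairToSeq p = d} =>
        decide (q.1.1.card % 2 = 0)) := by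
      intro q1 q2 h
      simp only [decide_eq_decide] at h
      have hpar : q1.1.1.card % 2 = q2.1.1.card % 2 := by omega
      exact Subtype.ext (fiber_eq q1.2.2.2 q2.2.2.2 hpar)
    haveI : Finite {p : Finset ℕ × Finset ℕ //
        StrictPartition p.1 ∧ StrictPartition p.2 ∧ pairToSeq p = d} :=
      Finite.of_injective _ hg
    constructor
    · haveI : Nonempty {p : Finset ℕ × Finset ℕ //
          StrictPartition p.1 ∧ StrictPartition p.2 ∧ pairToSeq p = d} := by
        obtain ⟨k, hk⟩ := mysplit_exists hInX.2
        obtain ⟨h1, h2, h3⟩ := pair_of_split hInX.1 hk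
        exact ⟨⟨_, h1, h2, h3⟩⟩
      exact Nat.card_pos
    · calc Nat.card {p : Finset ℕ × Finset ℕ //
            StrictPartition p.1 ∧ StrictPartition p.2 ∧ pairToSeq p = d}
          ≤ Nat.card Bool := Nat.card_le_card_of_injective _ hg
        _ = 2 := by simp
  · have hbound : ∀ s : Finset ℕ, s.sum id ≤ n →
        s ∈ (Finset.range (n + 1)).powerset := by
      intro s hs
      rw [Finset.mem_powerset]
      intro x hx
      rw [Finset.mem_range]
      have h2 : x ≤ s.sum id := Finset.single_le_sum (f := id) (fun i _ => Nat.zero_le _) hx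
      omega
    haveI hfinP : Finite {p : Finset ℕ × Finset ℕ //
        StrictPartition p.1 ∧ StrictPartition p.2 ∧ p.1.sum id + p.2.sum id = n} := by
      apply Finite.of_injective (fun p : {p : Finset ℕ × Finset ℕ //
          StrictPartition p.1 ∧ StrictPartition p.2 ∧ p.1.sum id + p.2.sum id = n} =>
        ((⟨p.1.1, hbound _ (by have := p.2.2.2; omega)⟩ :
            {s // s ∈ (Finset.range (n + 1)).powerset}),
         (⟨p.1.2, hbound _ (by have := p.2.2.2; omega)⟩ :
            {s // s ∈ (Finset.range (n + 1)).powerset})))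
      intro a b h
      simp only [Prod.mk.injEq, Subtype.mk.injEq] at h
      exact Subtype.ext (Prod.ext h.1 h.2)
    let Fm : {p : Finset ℕ × Finset ℕ //
        StrictPartition p.1 ∧ StrictPartition p.2 ∧ p.1.sum id + p.2.sum id = n} →
        {d : List ℕ // InX d ∧ d.sum = n} := fun p =>
      ⟨pairToSeq p.1, inX_pairToSeq p.2.1 p.2.2.1, by rw [sum_pairToSeq]; exact p.2.2.2⟩
    have hFs : Function.Surjective Fm := by
      rintro ⟨d, ⟨hpos, hnv⟩, hsum⟩
      obtain ⟨k, hk⟩ := mysplit_exists hnv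
      obtain ⟨h1, h2, h3⟩ := pair_of_split hpos hk
      refine ⟨⟨((d.take k).toFinset, ((d.drop k).reverse).toFinset), h1, h2, ?_⟩, ?_⟩
      · rw [← sum_pairToSeq, h3, hsum]
      · exact Subtype.ext h3
    haveI hfinS : Finite {d : List ℕ // InX d ∧ d.sum = n} := Finite.of_surjective Fm hFs
    constructor
    · have hG : Function.Injective (fun p : {p : Finset ℕ × Finset ℕ //
          StrictPartition p.1 ∧ StrictPartition p.2 ∧ p.1.sum id + p.2.sum id = n} =>
          ((Fm p, decide (p.1.1.card % 2 = 0)) :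
            {d : List ℕ // InX d ∧ d.sum = n} × Bool)) := by
        intro a b h
        rw [Prod.ext_iff] at h
        obtain ⟨h1, h2⟩ := h
        have hd : pairToSeq a.1 = pairToSeq b.1 := congrArg Subtype.val h1
        simp only [decide_eq_decide] at h2
        have hpar : a.1.1.card % 2 = b.1.1.card % 2 := by omega
        exact Subtype.ext (fiber_eq hd rfl hpar)
      calc utilde n
          ≤ Nat.card ({d : List ℕ // InX d ∧ d.sum = n} × Bool) :=
            Nat.card_le_card_of_injective _ hG
        _ = v n * 2 := by
            rw [Nat.card_prod]
            congr 1
            simp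
        _ = 2 * v n := by ring
    · exact Nat.card_le_card_of_surjective Fm hFs
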